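/- Let F : X → H satisfy ρ₋(d(x,y)) ≤ ‖F(x)−F(y)‖ ≤ ρ₊(d(x,y)) for nondecreasing ρ₋, ρ₊ : ℝ≥0 → ℝ≥0, let t > 0, and set ξ_x = e^{-t‖F(x)‖²} Exp(√(2t) F(x)). Then for all x, x' ∈ X: e^{-t ρ₊(d(x,x'))²} ≤ ⟨ξ_x, ξ_{x'}⟩ ≤ e^{-t ρ₋(d(x,x'))²}. -/
import Mathlib


open RealInnerProductSpace

/-- If `ρ₋(d(x,y)) ≤ ‖F x - F y‖ ≤ ρ₊(d(x,y))` for nondecreasing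
`ρ₋, ρ₊ : ℝ≥0 → ℝ≥0`, `t > 0`, and `ξ x = e^{-t‖F x‖²} Exp(√(2t) F x)` in the
Fock space, then `e^{-t ρ₊(d(x,x'))²} ≤ ⟨ξ x, ξ x'⟩ ≤ e^{-t ρ₋(d(x,x'))²}`. -/
theorem fock_vectors_inner_sandwich
    {X : Type*} [MetricSpace X]
    {H E : Type*} [NormedAddCommGroup H] [InnerProductSpace ℝ H]
    [NormedAddCommGroup E] [InnerProductSpace ℝ E]
    (Exp : H → E)
    (hExp : ∀ ζ ζ' : H, ⟪Exp ζ, Exp ζ'⟫ = Real.exp ⟪ζ, ζ'⟫)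
    (F : X → H) (ρminus ρplus : ℝ → ℝ)
    (hρminus_mono : Monotone ρminus) (hρplus_mono : Monotone ρplus)
    (hρminus_nonneg : ∀ s : ℝ, 0 ≤ ρminus s) (hρplus_nonneg : ∀ s : ℝ, 0 ≤ ρplus s)
    (hF : ∀ x y : X, ρminus (dist x y) ≤ ‖F x - F y‖ ∧ ‖F x - F y‖ ≤ ρplus (dist x y))
    (t : ℝ) (ht : 0 < t)
    (ξ : X → E)
    (hξ : ∀ x : X, ξ x = Real.exp (-t * ‖F x‖ ^ 2) • Exp (Real.sqrt (2 * t) • F x)) :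
    ∀ x x' : X,
      Real.exp (-t * ρplus (dist x x') ^ 2) ≤ ⟪ξ x, ξ x'⟫ ∧
      ⟪ξ x, ξ x'⟫ ≤ Real.exp (-t * ρminus (dist x x') ^ 2) := by
  intro x x'
  have key : ⟪ξ x, ξ x'⟫ = Real.exp (-t * ‖F x - F x'‖ ^ 2) := by
    rw [hξ x, hξ x', real_inner_smul_left, real_inner_smul_right, hExp,
      real_inner_smul_left, real_inner_smul_right]
    have hsq : Real.sqrt (2 * t) * (Real.sqrt (2 * t) * ⟪F x, F x'⟫) = 2 * t * ⟪F x, F x'⟫ := by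
      rw [← mul_assoc, Real.mul_self_sqrt (by positivity : (0:ℝ) ≤ 2 * t)]
    rw [hsq, ← Real.exp_add, ← Real.exp_add]
    congr 1
    have := @norm_sub_sq_real H _ _ (F x) (F x')
    rw [this]
    ring
  rw [key]
  obtain ⟨h1, h2⟩ := hF x x'
  constructor
  · apply Real.exp_le_exp.2
    have : ‖F x - F x'‖ ^ 2 ≤ ρplus (dist x x') ^ 2 :=
      pow_le_pow_left₀ (norm_nonneg _) h2 2
    nlinarith
  · apply Real.exp_le_exp.2
    have : ρminus (dist x x') ^ 2 ≤ ‖F x - F x'‖ ^ 2 :=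
      pow_le_pow_left₀ (hρminus_nonneg _) h1 2
    nlinarith
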